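/- With ψ as above and the Jacobian determinant nonzero, there exist open neighborhoods V ⊂ ℝ² of (0,0) and U ⊂ ℝ³ of (A₁^∞, A₂^∞, x*^∞) and a unique C¹ function φ : V → U with φ(0,0) = (A₁^∞, A₂^∞, x*^∞) such that ψ(φ(ε₁, ε₂), ε₁, ε₂) = 0 for all (ε₁, ε₂) ∈ V; consequently the solutions (A₁(C), A₂(C), x*_C) of the truncated smooth-fit system converge to (A₁^∞, A₂^∞, x*^∞) as C → ∞. -/

import Mathlib

open Real Filter Set

set_option maxHeartbeats 1000000 in
/-- Implicit function theorem for the smooth-fit system: there are neighborhoods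
`V ∋ (0,0)` and `U ∋ (A₁^∞, A₂^∞, x*^∞)` and a unique `C¹` map `φ : V → U` solving
`ψ(φ(ε₁,ε₂), ε₁, ε₂) = 0`; consequently the solutions of the truncated systems converge
to `(A₁^∞, A₂^∞, x*^∞)` as `C → ∞`. -/
theorem implicit_function_and_convergence (D₁ D₂ B K r : ℝ)
    (hD₂ : D₂ < 0) (hD₁ : 2 < D₁) (hB : 0 < B) (hK : 0 < K) (hr : 0 < r)
    (xs A₂s : ℝ)
    (hxs : xs = Real.sqrt (-D₂ / (2 - D₂) * (K / r) / B))
    (hA₂ : A₂s = 2 / (2 - D₂) * (K / r) * xs ^ (-D₂))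
    (ψ : ℝ × ℝ × ℝ → ℝ × ℝ → ℝ × ℝ × ℝ)
    (hψ : ∀ a₁ a₂ x e₁ e₂, ψ (a₁, a₂, x) (e₁, e₂) =
      (a₁ + e₁ * a₂ + e₂,
       a₁ * x ^ D₁ + a₂ * x ^ D₂ + B * x ^ (2 : ℕ) - K / r,
       D₁ * a₁ * x ^ D₁ + D₂ * a₂ * x ^ D₂ + 2 * B * x ^ (2 : ℕ))) :
    ∃ (V : Set (ℝ × ℝ)) (U : Set (ℝ × ℝ × ℝ)) (φ : ℝ × ℝ → ℝ × ℝ × ℝ),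
      IsOpen V ∧ (0, 0) ∈ V ∧ IsOpen U ∧ ((0 : ℝ), A₂s, xs) ∈ U ∧
      ContDiffOn ℝ 1 φ V ∧ φ (0, 0) = ((0 : ℝ), A₂s, xs) ∧
      (∀ p ∈ V, φ p ∈ U ∧ ψ (φ p) p = 0) ∧
      -- uniqueness: any solution of the system lying in `U` agrees with `φ`
      (∀ p ∈ V, ∀ q ∈ U, ψ q p = 0 → q = φ p) ∧
      -- consequently, solutions of the truncated systems converge to the limit point
      (∀ sol : ℝ → ℝ × ℝ × ℝ, ∀ ε : ℝ → ℝ × ℝ,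
        Tendsto ε atTop (nhds (0, 0)) →
        (∀ᶠ C in atTop, ε C ∈ V ∧ sol C ∈ U ∧ ψ (sol C) (ε C) = 0) →
        Tendsto sol atTop (nhds ((0 : ℝ), A₂s, xs))) := by
  have h2D : (0:ℝ) < 2 - D₂ := by linarith
  have harg : 0 < -D₂ / (2 - D₂) * (K / r) / B := by
    apply div_pos (mul_pos (div_pos (by linarith) h2D) (div_pos hK hr)) hB
  have hxs0 : 0 < xs := by rw [hxs]; exact Real.sqrt_pos.2 harg
  have hq : xs ^ (2:ℕ) = -D₂ / (2 - D₂) * (K / r) / B := by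
    rw [hxs, sq_sqrt harg.le]
  have hut : xs ^ (-D₂) * xs ^ D₂ = 1 := by
    rw [← Real.rpow_add hxs0]; simp
  have h2 : A₂s * xs ^ D₂ + B * xs ^ (2:ℕ) - K / r = 0 := by
    rw [hA₂, hq]; field_simp
    linear_combination (2*K) * hut
  have h3 : D₂ * A₂s * xs ^ D₂ + 2 * B * xs ^ (2:ℕ) = 0 := by
    rw [hA₂, hq]; field_simp
    linear_combination (2*D₂*K) * hut
  -- abbreviations
  set a₀ : (ℝ × ℝ × ℝ) × (ℝ × ℝ) := (((0:ℝ), A₂s, xs), ((0:ℝ), 0)) with ha₀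
  set F : (ℝ × ℝ × ℝ) × (ℝ × ℝ) → (ℝ × ℝ × ℝ) × (ℝ × ℝ) := fun z =>
    ((z.1.1 + z.2.1 * z.1.2.1 + z.2.2,
      z.1.1 * z.1.2.2 ^ D₁ + z.1.2.1 * z.1.2.2 ^ D₂ + B * z.1.2.2 ^ (2:ℕ) - K / r,
      D₁ * z.1.1 * z.1.2.2 ^ D₁ + D₂ * z.1.2.1 * z.1.2.2 ^ D₂ + 2 * B * z.1.2.2 ^ (2:ℕ)),
     z.2) with hF
  have hFψ : ∀ z : (ℝ × ℝ × ℝ) × (ℝ × ℝ), F z = (ψ z.1 z.2, z.2) := by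
    rintro ⟨⟨a₁, a₂, x⟩, e₁, e₂⟩
    rw [hψ a₁ a₂ x e₁ e₂]
  have hFa : F a₀ = 0 := by
    simp only [hF, ha₀]
    norm_num [Prod.ext_iff, Prod.fst_zero, Prod.snd_zero]
    constructor <;> linarith
  -- constants for the derivative
  set p1 : ℝ := xs ^ D₁ with hp1
  set P2 : ℝ := xs ^ D₂ with hP2
  set c₂ : ℝ := D₂ * A₂s * xs ^ (D₂ - 1) + 2 * B * xs with hc₂
  set c₃ : ℝ := D₂ ^ 2 * A₂s * xs ^ (D₂ - 1) + 4 * B * xs with hc₃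
  have hP2ne : P2 ≠ 0 := (Real.rpow_pos_of_pos hxs0 D₂).ne'
  -- the derivative as a continuous linear map
  set Llin : (ℝ × ℝ × ℝ) × (ℝ × ℝ) →ₗ[ℝ] (ℝ × ℝ × ℝ) × (ℝ × ℝ) :=
    { toFun := fun v =>
        ((v.1.1 + A₂s * v.2.1 + v.2.2,
          p1 * v.1.1 + P2 * v.1.2.1 + c₂ * v.1.2.2,
          D₁ * p1 * v.1.1 + D₂ * P2 * v.1.2.1 + c₃ * v.1.2.2),
         (v.2.1, v.2.2))
      map_add' := by
        intro x y
        simp only [Prod.ext_iff, Prod.fst_add, Prod.snd_add]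
        and_intros <;> grind
      map_smul' := by
        intro m x
        simp only [Prod.ext_iff, Prod.smul_fst, Prod.smul_snd, smul_eq_mul, RingHom.id_apply]
        and_intros <;> grind } with hLlin
  set L : (ℝ × ℝ × ℝ) × (ℝ × ℝ) →L[ℝ] (ℝ × ℝ × ℝ) × (ℝ × ℝ) := Llin.toContinuousLinearMap with hL
  have hLapp : ∀ v : (ℝ × ℝ × ℝ) × (ℝ × ℝ), L v =
      ((v.1.1 + A₂s * v.2.1 + v.2.2,
        p1 * v.1.1 + P2 * v.1.2.1 + c₂ * v.1.2.2,
        D₁ * p1 * v.1.1 + D₂ * P2 * v.1.2.1 + c₃ * v.1.2.2),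
       (v.2.1, v.2.2)) := fun v => rfl
  -- injectivity of L
  have hinj : Function.Injective L := by
    rw [injective_iff_map_eq_zero]
    rintro ⟨⟨a,b,c⟩,d,e⟩ hv
    rw [hLapp] at hv
    simp only [Prod.ext_iff, Prod.fst_zero, Prod.snd_zero] at hv
    obtain ⟨⟨h₁, h₂, h₃⟩, h₄, h₅⟩ := hv
    subst h₄ h₅
    have ha : a = 0 := by linarith
    subst ha
    have hc : c = 0 := by
      have hdet : (c₃ - D₂ * c₂) * c = 0 := by
        rw [hc₂, hc₃]; linear_combination h₃ - D₂ * h₂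
      have : c₃ - D₂ * c₂ = 2 * B * xs * (2 - D₂) := by rw [hc₂, hc₃]; ring
      rw [this] at hdet
      have hne : 2 * B * xs * (2 - D₂) ≠ 0 := by positivity
      exact (mul_eq_zero.1 hdet).resolve_left hne
    subst hc
    have hb : b = 0 := by
      have : P2 * b = 0 := by linarith
      exact (mul_eq_zero.1 this).resolve_left hP2ne
    simp [hb]
  -- derivative of F at a₀
  have hx := ((hasFDerivAt_id (𝕜 := ℝ) a₀).fst).snd.snd
  have ha1 := ((hasFDerivAt_id (𝕜 := ℝ) a₀).fst).fst
  have ha2 := (((hasFDerivAt_id (𝕜 := ℝ) a₀).fst).snd).fst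
  have he1 := ((hasFDerivAt_id (𝕜 := ℝ) a₀).snd).fst
  have he2 := ((hasFDerivAt_id (𝕜 := ℝ) a₀).snd).snd
  have hxD1 := hx.rpow_const (p := D₁) (Or.inl (show a₀.1.2.2 ≠ 0 from hxs0.ne'))
  have hxD2 := hx.rpow_const (p := D₂) (Or.inl (show a₀.1.2.2 ≠ 0 from hxs0.ne'))
  have hsq := (hasDerivAt_pow 2 (a₀.1.2.2)).comp_hasFDerivAt a₀ hx
  have h1' := (ha1.add (he1.mul ha2)).add he2
  have h2' := (((ha1.mul hxD1).add (ha2.mul hxD2)).add (hsq.const_mul B)).sub_const (K/r)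
  have h3' := (((ha1.const_mul D₁).mul hxD1).add ((ha2.const_mul D₂).mul hxD2)).add
      (hsq.const_mul (2*B))
  have hFbig := HasFDerivAt.prodMk (HasFDerivAt.prodMk h1' (HasFDerivAt.prodMk h2' h3')) ((hasFDerivAt_id (𝕜 := ℝ) a₀).snd)
  have hFd : HasFDerivAt F L a₀ := by
    refine hFbig.congr_fderiv ?_
    apply ContinuousLinearMap.ext
    rintro ⟨⟨u,v,w⟩,s,t⟩
    rw [hLapp]
    simp only [ContinuousLinearMap.coe_comp', ContinuousLinearMap.prod_apply,
      ContinuousLinearMap.add_apply, ContinuousLinearMap.smul_apply,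
      ContinuousLinearMap.coe_fst', ContinuousLinearMap.coe_snd',
      ContinuousLinearMap.coe_id', Function.comp_apply, id_eq, smul_eq_mul,
      ha₀, hp1, hP2, hc₂, hc₃, Prod.ext_iff]
    norm_num
    constructor <;> ring
  -- smoothness of F at a₀
  have hcx : ContDiffAt ℝ 1 (fun z : (ℝ × ℝ × ℝ) × (ℝ × ℝ) => z.1.2.2) a₀ :=
    (contDiff_snd.comp (contDiff_snd.comp contDiff_fst)).contDiffAt
  have hca1 : ContDiffAt ℝ 1 (fun z : (ℝ × ℝ × ℝ) × (ℝ × ℝ) => z.1.1) a₀ :=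
    (contDiff_fst.comp contDiff_fst).contDiffAt
  have hca2 : ContDiffAt ℝ 1 (fun z : (ℝ × ℝ × ℝ) × (ℝ × ℝ) => z.1.2.1) a₀ :=
    (contDiff_fst.comp (contDiff_snd.comp contDiff_fst)).contDiffAt
  have hce1 : ContDiffAt ℝ 1 (fun z : (ℝ × ℝ × ℝ) × (ℝ × ℝ) => z.2.1) a₀ :=
    (contDiff_fst.comp contDiff_snd).contDiffAt
  have hce2 : ContDiffAt ℝ 1 (fun z : (ℝ × ℝ × ℝ) × (ℝ × ℝ) => z.2.2) a₀ :=
    (contDiff_snd.comp contDiff_snd).contDiffAt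
  have hcxD1 : ContDiffAt ℝ 1 (fun z : (ℝ × ℝ × ℝ) × (ℝ × ℝ) => z.1.2.2 ^ D₁) a₀ :=
    hcx.rpow_const_of_ne (show a₀.1.2.2 ≠ 0 from hxs0.ne')
  have hcxD2 : ContDiffAt ℝ 1 (fun z : (ℝ × ℝ × ℝ) × (ℝ × ℝ) => z.1.2.2 ^ D₂) a₀ :=
    hcx.rpow_const_of_ne (show a₀.1.2.2 ≠ 0 from hxs0.ne')
  have hCD : ContDiffAt ℝ 1 F a₀ := by
    refine ContDiffAt.prodMk (ContDiffAt.prodMk ?_ (ContDiffAt.prodMk ?_ ?_)) contDiff_snd.contDiffAt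
    · exact (hca1.add (hce1.mul hca2)).add hce2
    · exact (((hca1.mul hcxD1).add (hca2.mul hcxD2)).add
        (contDiffAt_const.mul (hcx.pow 2))).sub contDiffAt_const
    · exact (((contDiffAt_const.mul hca1).mul hcxD1).add
        ((contDiffAt_const.mul hca2).mul hcxD2)).add (contDiffAt_const.mul (hcx.pow 2))
  -- the derivative is a continuous linear equivalence
  have hker : LinearMap.ker (L : (ℝ × ℝ × ℝ) × (ℝ × ℝ) →ₗ[ℝ] (ℝ × ℝ × ℝ) × (ℝ × ℝ)) = ⊥ := LinearMap.ker_eq_bot_of_injective (f := (L : (ℝ × ℝ × ℝ) × (ℝ × ℝ) →ₗ[ℝ] (ℝ × ℝ × ℝ) × (ℝ × ℝ))) hinj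
  have hsurj : Function.Surjective L := LinearMap.injective_iff_surjective (f := (L : (ℝ × ℝ × ℝ) × (ℝ × ℝ) →ₗ[ℝ] (ℝ × ℝ × ℝ) × (ℝ × ℝ))) |>.1 hinj
  have hrange : LinearMap.range (L : (ℝ × ℝ × ℝ) × (ℝ × ℝ) →ₗ[ℝ] (ℝ × ℝ × ℝ) × (ℝ × ℝ)) = ⊤ := LinearMap.range_eq_top (f := (L : (ℝ × ℝ × ℝ) × (ℝ × ℝ) →ₗ[ℝ] (ℝ × ℝ × ℝ) × (ℝ × ℝ))) |>.2 hsurj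
  set e : ((ℝ × ℝ × ℝ) × (ℝ × ℝ)) ≃L[ℝ] ((ℝ × ℝ × ℝ) × (ℝ × ℝ)) :=
    ContinuousLinearEquiv.ofBijective L hker hrange with he
  have hecoe : (e : ((ℝ × ℝ × ℝ) × (ℝ × ℝ)) →L[ℝ] ((ℝ × ℝ × ℝ) × (ℝ × ℝ))) = L :=
    ContinuousLinearEquiv.coe_ofBijective L hker hrange
  have hFe : HasFDerivAt F (e : ((ℝ × ℝ × ℝ) × (ℝ × ℝ)) →L[ℝ] ((ℝ × ℝ × ℝ) × (ℝ × ℝ))) a₀ := by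
    rw [hecoe]; exact hFd
  have hS : HasStrictFDerivAt F
      (e : ((ℝ × ℝ × ℝ) × (ℝ × ℝ)) →L[ℝ] ((ℝ × ℝ × ℝ) × (ℝ × ℝ))) a₀ :=
    hCD.hasStrictFDerivAt' hFe one_ne_zero
  set g : ((ℝ × ℝ × ℝ) × (ℝ × ℝ)) → ((ℝ × ℝ × ℝ) × (ℝ × ℝ)) := hS.localInverse F e a₀ with hgdef
  have hgCD : ContDiffAt ℝ 1 g (F a₀) := hCD.to_localInverse hFe one_ne_zero
  -- neighborhoods where g is a two-sided inverse and C¹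
  obtain ⟨W₁, hW₁mem, hW₁open, hW₁a⟩ := eventually_nhds_iff.1 hS.eventually_left_inverse
  obtain ⟨u₁, hu₁, hgu⟩ := hgCD.contDiffOn le_rfl (by simp)
  obtain ⟨W₂, hW₂mem, hW₂open, hW₂y⟩ :=
    eventually_nhds_iff.1 (hS.eventually_right_inverse.and hu₁)
  have hgW₂ : ContDiffOn ℝ 1 g W₂ := hgu.mono fun y hy => (hW₂mem y hy).2
  have hW₁nhds : W₁ ∈ nhds (((0:ℝ), A₂s, xs), ((0:ℝ), 0)) := by
    have := hW₁open.mem_nhds hW₁a; rwa [ha₀] at this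
  obtain ⟨U₁, V₁, hU₁o, hU₁m, hV₁o, hV₁m, hUV₁⟩ := mem_nhds_prod_iff'.1 hW₁nhds
  have h0W₂ : (((0:ℝ),0,0), ((0:ℝ),0)) ∈ W₂ := by
    have := hW₂y; rwa [hFa] at this
  obtain ⟨T, V₂, hTo, hTm, hV₂o, hV₂m, hUV₂⟩ :=
    mem_nhds_prod_iff'.1 (hW₂open.mem_nhds h0W₂)
  set φ : ℝ × ℝ → ℝ × ℝ × ℝ := fun p => (g (((0:ℝ),0,0), p)).1 with hφdef
  have hιmem : ∀ p ∈ V₂, ((((0:ℝ),0,0) : ℝ × ℝ × ℝ), p) ∈ W₂ := fun p hp =>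
    hUV₂ (Set.mk_mem_prod hTm hp)
  have hφCD : ContDiffOn ℝ 1 φ V₂ := by
    have hι : ContDiffOn ℝ 1 (fun p : ℝ × ℝ => ((((0:ℝ),0,0) : ℝ × ℝ × ℝ), p)) V₂ :=
      (contDiff_const.prodMk contDiff_id).contDiffOn
    exact contDiff_fst.comp_contDiffOn (hgW₂.comp hι hιmem)
  have hg0 : g 0 = a₀ := by rw [← hFa]; exact hS.localInverse_apply_image
  have hφ00 : φ (0,0) = ((0:ℝ), A₂s, xs) := by
    show (g (((0:ℝ),0,0), ((0:ℝ),0))).1 = _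
    rw [show ((((0:ℝ),0,0) : ℝ × ℝ × ℝ), ((0:ℝ),0)) = (0 : (ℝ × ℝ × ℝ) × (ℝ × ℝ)) from rfl,
      hg0, ha₀]
  -- the neighborhood V
  set V : Set (ℝ × ℝ) := (V₁ ∩ V₂) ∩ φ ⁻¹' U₁ with hVdef
  have hVo : IsOpen V :=
    (hφCD.continuousOn.mono inter_subset_right).isOpen_inter_preimage (hV₁o.inter hV₂o) hU₁o
  have hV00 : ((0:ℝ),(0:ℝ)) ∈ V := ⟨⟨hV₁m, hV₂m⟩, by rw [Set.mem_preimage, hφ00]; exact hU₁m⟩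
  -- solution property
  have hsolve : ∀ p ∈ V, φ p ∈ U₁ ∧ ψ (φ p) p = 0 := by
    intro p hp
    refine ⟨hp.2, ?_⟩
    have hy := hιmem p hp.1.2
    set z := g (((0:ℝ),0,0), p) with hz
    have hFg : F z = ((((0:ℝ),0,0) : ℝ × ℝ × ℝ), p) := (hW₂mem _ hy).1
    have key := (hFψ z).symm.trans hFg
    have hz2 : z.2 = p := congrArg Prod.snd key
    have hψ0 : ψ z.1 z.2 = (((0:ℝ),0,0) : ℝ × ℝ × ℝ) := congrArg Prod.fst key
    show ψ z.1 p = 0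
    rw [← hz2]; exact hψ0
  -- uniqueness
  have huniq : ∀ p ∈ V, ∀ q ∈ U₁, ψ q p = 0 → q = φ p := by
    intro p hp q hq hψq
    have hqp : (q, p) ∈ W₁ := hUV₁ (Set.mk_mem_prod hq hp.1.1)
    have h1 := hW₁mem _ hqp
    have hFqp : F (q, p) = ((((0:ℝ),0,0) : ℝ × ℝ × ℝ), p) := by
      rw [hFψ (q, p)]
      show (ψ q p, p) = _
      rw [hψq]; rfl
    rw [hFqp] at h1
    exact (congrArg Prod.fst h1).symm
  -- continuity of φ at the origin
  have hφc : ContinuousAt φ ((0:ℝ),(0:ℝ)) := by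
    have hg' : ContinuousAt g ((((0:ℝ),0,0) : ℝ × ℝ × ℝ), ((0:ℝ),0)) := by
      have := hgCD.continuousAt; rwa [hFa] at this
    exact continuous_fst.continuousAt.comp
      (hg'.comp ((continuous_const.prodMk continuous_id).continuousAt))
  refine ⟨V, U₁, φ, hVo, hV00, hU₁o, hU₁m, hφCD.mono (fun p hp => hp.1.2), hφ00, hsolve,
    huniq, ?_⟩
  intro sol ε hε hev
  have hlim : Tendsto (fun C => φ (ε C)) atTop (nhds ((0:ℝ), A₂s, xs)) := by
    rw [← hφ00]; exact hφc.tendsto.comp hε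
  refine hlim.congr' ?_ |>.mono_right le_rfl
  filter_upwards [hev] with C hC
  exact (huniq (ε C) hC.1 (sol C) hC.2.1 hC.2.2).symm
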